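/- arXiv:2604.07149 — 3 statements merged into one kernel-verified Lean document; each statement's English description precedes it below -/
import Mathlib

section
/- Let 0 < Θ < π/4, 0 < φ < π/2 - 2Θ, θ ∈ (-Θ, Θ), r_θ := π sin Θ / sin(Θ + |θ|), and let λ ∈ ℂ with λ ≠ 0 and |arg λ| < π/2 + φ. Then for every r ∈ [0, r_θ], one has Re(√λ · (π - r e^{iθ})) ≥ 0, where √λ is the principal square root. -/
open Real Complex

theorem re_sqrt_mul_nonneg (Θ φ θ : ℝ) (hΘ0 : 0 < Θ) (hΘ : Θ < π / 4)
    (hφ0 : 0 < φ) (hφ : φ < π / 2 - 2 * Θ)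
    (hθ : θ ∈ Set.Ioo (-Θ) Θ)
    (lam : ℂ) (hlam : lam ≠ 0) (harg : |Complex.arg lam| < π / 2 + φ)
    (r : ℝ) (hr : r ∈ Set.Icc 0 (π * Real.sin Θ / Real.sin (Θ + |θ|))) :
    0 ≤ (lam ^ (1 / 2 : ℂ) * ((π : ℂ) - r * Complex.exp (θ * Complex.I))).re := by
  obtain ⟨hθ1, hθ2⟩ := hθ
  obtain ⟨hr0, hr1⟩ := hr
  set ν := Complex.arg lam with hνdef
  have hν : |ν| < π - 2 * Θ := harg.trans (by linarith)
  have hνlt := (abs_lt.mp hν).2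
  have hνgt := (abs_lt.mp hν).1
  have hπ : (0:ℝ) < π := Real.pi_pos
  -- angle positivity facts
  have hcosα : 0 < Real.cos (ν / 2) :=
    Real.cos_pos_of_mem_Ioo ⟨by linarith, by linarith⟩
  have hcosαθ : 0 < Real.cos (ν / 2 + θ) :=
    Real.cos_pos_of_mem_Ioo ⟨by linarith, by linarith⟩
  have habsθ : |θ| < Θ := abs_lt.mpr ⟨hθ1, hθ2⟩
  have habsθ0 : 0 ≤ |θ| := abs_nonneg θ
  have hsinΘθ : 0 < Real.sin (Θ + |θ|) :=
    Real.sin_pos_of_pos_of_lt_pi (by linarith) (by linarith)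
  -- key inequality : sin Θ * cos (ν/2 + θ) ≤ sin (Θ + |θ|) * cos (ν/2)
  have key : Real.sin Θ * Real.cos (ν / 2 + θ) ≤ Real.sin (Θ + |θ|) * Real.cos (ν / 2) := by
    rcases le_or_gt 0 θ with h0 | h0
    · rw [_root_.abs_of_nonneg h0]
      have hc : 0 < Real.cos (Θ - ν / 2) :=
        Real.cos_pos_of_mem_Ioo ⟨by linarith, by linarith⟩
      rw [Real.cos_sub] at hc
      have h1 : 0 ≤ Real.sin θ * (Real.cos Θ * Real.cos (ν / 2) + Real.sin Θ * Real.sin (ν / 2)) :=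
        mul_nonneg (Real.sin_nonneg_of_nonneg_of_le_pi h0 (by linarith)) hc.le
      rw [Real.sin_add, Real.cos_add]
      nlinarith [h1]
    · rw [abs_of_neg h0]
      have hc : 0 < Real.cos (Θ + ν / 2) :=
        Real.cos_pos_of_mem_Ioo ⟨by linarith, by linarith⟩
      rw [Real.cos_add] at hc
      have hsθ : Real.sin θ ≤ 0 := Real.sin_nonpos_of_nonpos_of_neg_pi_le h0.le (by linarith)
      have h1 : 0 ≤ (-Real.sin θ) * (Real.cos Θ * Real.cos (ν / 2) - Real.sin Θ * Real.sin (ν / 2)) :=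
        mul_nonneg (by linarith) hc.le
      rw [show Θ + -θ = Θ - θ by ring, Real.sin_sub, Real.cos_add]
      nlinarith [h1]
  -- hence r * cos(ν/2 + θ) ≤ π * cos (ν/2)
  have key2 : r * Real.cos (ν / 2 + θ) ≤ π * Real.cos (ν / 2) := by
    have step1 : r * Real.cos (ν / 2 + θ)
        ≤ (π * Real.sin Θ / Real.sin (Θ + |θ|)) * Real.cos (ν / 2 + θ) :=
      mul_le_mul_of_nonneg_right hr1 hcosαθ.le
    refine step1.trans ?_
    rw [div_mul_eq_mul_div, div_le_iff₀ hsinΘθ]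
    nlinarith [key]
  -- compute the real part
  have hsq : lam ^ (1 / 2 : ℂ) = Complex.exp (Complex.log lam * (1 / 2)) :=
    Complex.cpow_def_of_ne_zero hlam _
  have hexp : Complex.exp ((θ : ℂ) * Complex.I)
      = Complex.cos θ + Complex.sin θ * Complex.I := Complex.exp_mul_I _
  rw [hsq, hexp]
  simp only [Complex.mul_re, Complex.mul_im, Complex.sub_re, Complex.sub_im,
    Complex.exp_re, Complex.exp_im, Complex.add_re, Complex.add_im,
    Complex.ofReal_re, Complex.ofReal_im, Complex.I_re, Complex.I_im,
    Complex.one_re, Complex.one_im, Complex.div_re, Complex.div_im,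
    Complex.log_re, Complex.log_im, Complex.cos_ofReal_re, Complex.cos_ofReal_im,
    Complex.sin_ofReal_re, Complex.sin_ofReal_im]
  ring_nf
  norm_num [Complex.normSq_apply]
  rw [show (1:ℝ)/2 * lam.arg = ν/2 by rw [hνdef]; ring]
  have hE := (Real.exp_pos (Real.log ‖lam‖ * 2 * (1 / 4))).le
  have h3 := mul_le_mul_of_nonneg_left key2 hE
  rw [Real.cos_add] at h3
  nlinarith [h3]
end

section
/- Let 0 < δ < 1. Then there exists a constant C > 0, depending only on δ, such that for every continuously differentiable function f : (0, π) → ℂ with ∫₀^π x^{1+δ}(π-x)^{1+δ}(|f(x)|² + |f'(x)|²) dx < ∞, one has ∫₀^π |f(x)|² dx ≤ C ∫₀^π x^{1+δ}(π-x)^{1+δ}(|f(x)|² + |f'(x)|²) dx. -/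
open Real MeasureTheory

lemma cnorm_sq (z : ℂ) : ‖z‖ ^ 2 = z.re ^ 2 + z.im ^ 2 := by
  rw [Complex.sq_norm, Complex.normSq_apply]; ring

lemma hasDerivAt_norm_sq {f : ℝ → ℂ} {f' : ℂ} {x : ℝ} (h : HasDerivAt f f' x) :
    HasDerivAt (fun t => ‖f t‖ ^ 2)
      (2 * ((f x).re * f'.re + (f x).im * f'.im)) x := by
  have hre : HasDerivAt (fun t => (f t).re) f'.re x :=
    Complex.reCLM.hasFDerivAt.comp_hasDerivAt x h
  have him : HasDerivAt (fun t => (f t).im) f'.im x :=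
    Complex.imCLM.hasFDerivAt.comp_hasDerivAt x h
  have h2 : HasDerivAt (fun t => (f t).re ^ 2 + (f t).im ^ 2) _ x := (hre.pow 2).add (him.pow 2)
  have hfun : (fun t => ‖f t‖ ^ 2) = fun t => (f t).re ^ 2 + (f t).im ^ 2 := by
    funext t; exact cnorm_sq _
  rw [hfun]
  convert h2 using 1
  ring

lemma gronwall_aux (δ : ℝ) (hδ : 0 < δ) (f f' : ℝ → ℂ) (x x₀ : ℝ)
    (hx : 0 < x) (hxx : x ≤ x₀)
    (hder : ∀ t ∈ Set.Icc x x₀, HasDerivAt f (f' t) t)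
    (hcont : ContinuousOn f' (Set.Icc x x₀)) :
    x ^ δ * ‖f x‖ ^ 2 ≤ x₀ ^ δ * ‖f x₀‖ ^ 2
      + (1/δ) * ∫ t in x..x₀, t ^ (1+δ) * ‖f' t‖ ^ 2 := by
  have huIcc : Set.uIcc x x₀ = Set.Icc x x₀ := Set.uIcc_of_le hxx
  set G : ℝ → ℝ := fun t => t ^ δ * ‖f t‖ ^ 2 with hG
  set g : ℝ → ℝ := fun t =>
    δ * t ^ (δ-1) * ‖f t‖ ^ 2
      + t ^ δ * (2 * ((f t).re * (f' t).re + (f t).im * (f' t).im)) with hg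
  have hfc : ContinuousOn f (Set.Icc x x₀) := fun t ht =>
    (hder t ht).continuousAt.continuousWithinAt
  have hGd : ∀ t ∈ Set.uIcc x x₀, HasDerivAt G (g t) t := by
    intro t ht
    rw [huIcc] at ht
    have ht0 : 0 < t := lt_of_lt_of_le hx ht.1
    have h1 : HasDerivAt (fun s : ℝ => s ^ δ) (δ * t ^ (δ-1)) t :=
      Real.hasDerivAt_rpow_const (Or.inl ht0.ne')
    have h2 := hasDerivAt_norm_sq (hder t ht)
    have : HasDerivAt (fun s => s ^ δ * ‖f s‖ ^ 2) _ t := h1.mul h2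
    convert this using 1
  have hnc : ContinuousOn (fun t => ‖f t‖ ^ 2) (Set.Icc x x₀) := (hfc.norm.pow 2)
  have hrec : ContinuousOn (fun t => (f t).re) (Set.Icc x x₀) :=
    Complex.continuous_re.comp_continuousOn hfc
  have himc : ContinuousOn (fun t => (f t).im) (Set.Icc x x₀) :=
    Complex.continuous_im.comp_continuousOn hfc
  have hrec' : ContinuousOn (fun t => (f' t).re) (Set.Icc x x₀) :=
    Complex.continuous_re.comp_continuousOn hcont
  have himc' : ContinuousOn (fun t => (f' t).im) (Set.Icc x x₀) :=
    Complex.continuous_im.comp_continuousOn hcont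
  have hne : ∀ t ∈ Set.Icc x x₀, t ≠ 0 ∨ (0:ℝ) ≤ δ - 1 := fun t ht =>
    Or.inl (ne_of_gt (lt_of_lt_of_le hx ht.1))
  have hne' : ∀ t ∈ Set.Icc x x₀, t ≠ 0 ∨ (0:ℝ) ≤ δ := fun t ht =>
    Or.inl (ne_of_gt (lt_of_lt_of_le hx ht.1))
  have hgc : ContinuousOn g (Set.Icc x x₀) := by
    apply ContinuousOn.add
    · exact (continuousOn_const.mul (continuousOn_id.rpow_const hne)).mul hnc
    · exact (continuousOn_id.rpow_const hne').mul
        (continuousOn_const.mul ((hrec.mul hrec').add (himc.mul himc')))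
  have hgi : IntervalIntegrable g volume x x₀ := by
    rw [← huIcc] at hgc; exact hgc.intervalIntegrable
  have hFTC : ∫ t in x..x₀, g t = G x₀ - G x :=
    intervalIntegral.integral_eq_sub_of_hasDerivAt hGd hgi
  have hrhs : ContinuousOn (fun t : ℝ => (1/δ) * (t ^ (1+δ) * ‖f' t‖ ^ 2)) (Set.Icc x x₀) := by
    have : ∀ t ∈ Set.Icc x x₀, t ≠ 0 ∨ (0:ℝ) ≤ 1 + δ := fun t ht =>
      Or.inl (ne_of_gt (lt_of_lt_of_le hx ht.1))
    exact continuousOn_const.mul ((continuousOn_id.rpow_const this).mul (hcont.norm.pow 2))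
  have hrhsi : IntervalIntegrable (fun t : ℝ => (1/δ) * (t ^ (1+δ) * ‖f' t‖ ^ 2)) volume x x₀ := by
    rw [← huIcc] at hrhs; exact hrhs.intervalIntegrable
  have hptwise : ∀ t ∈ Set.Icc x x₀, -g t ≤ (1/δ) * (t ^ (1+δ) * ‖f' t‖ ^ 2) := by
    intro t ht
    have ht0 : 0 < t := lt_of_lt_of_le hx ht.1
    have hs : (0:ℝ) < t ^ δ := Real.rpow_pos_of_pos ht0 δ
    have ht1 : t ^ (δ-1) = t ^ δ / t := by
      rw [Real.rpow_sub ht0, Real.rpow_one]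
    have ht2 : t ^ (1+δ) = t * t ^ δ := by
      rw [Real.rpow_add ht0, Real.rpow_one]
    simp only [hg, ht1, ht2, cnorm_sq]
    set a := (f t).re; set b := (f t).im; set c := (f' t).re; set d := (f' t).im
    set s := t ^ δ
    have key : (1/δ) * (t * s * (c^2+d^2))
        - (-(δ * (s/t) * (a^2+b^2) + s * (2 * (a*c+b*d))))
        = s * ((δ*a+t*c)^2+(δ*b+t*d)^2)/(t*δ) := by
      field_simp
      ring
    rw [← sub_nonneg, key]
    positivity
  have hmono : ∫ t in x..x₀, -g t ≤ ∫ t in x..x₀, (1/δ) * (t ^ (1+δ) * ‖f' t‖ ^ 2) :=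
    intervalIntegral.integral_mono_on hxx hgi.neg hrhsi hptwise
  rw [intervalIntegral.integral_neg, hFTC, intervalIntegral.integral_const_mul] at hmono
  have hGx : G x = x ^ δ * ‖f x‖ ^ 2 := rfl
  have hGx0 : G x₀ = x₀ ^ δ * ‖f x₀‖ ^ 2 := rfl
  linarith [hmono]

set_option maxHeartbeats 2000000 in
theorem weighted_hardy_poincare (δ : ℝ) (hδ0 : 0 < δ) (hδ1 : δ < 1) :
    ∃ C > 0, ∀ (f f' : ℝ → ℂ),
      (∀ x ∈ Set.Ioo (0 : ℝ) π, HasDerivAt f (f' x) x) →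
      ContinuousOn f' (Set.Ioo 0 π) →
      IntegrableOn
        (fun x : ℝ => x ^ (1 + δ) * (π - x) ^ (1 + δ) * (‖f x‖ ^ 2 + ‖f' x‖ ^ 2))
        (Set.Ioo 0 π) →
      ∫ x in Set.Ioo (0 : ℝ) π, ‖f x‖ ^ 2 ≤
        C * ∫ x in Set.Ioo (0 : ℝ) π,
          x ^ (1 + δ) * (π - x) ^ (1 + δ) * (‖f x‖ ^ 2 + ‖f' x‖ ^ 2) := by
  have hπ : (0:ℝ) < π := Real.pi_pos
  set c : ℝ := (π/4) ^ (1+δ) * (π/4) ^ (1+δ) with hcdef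
  have hc0 : 0 < c := mul_pos (Real.rpow_pos_of_pos (by positivity) _)
    (Real.rpow_pos_of_pos (by positivity) _)
  set K : ℝ := π ^ δ * (2 / (π * c)) + (1/δ) * (4/π) ^ (1+δ) with hKdef
  have hK0 : 0 < K := by
    have h1 : 0 < π ^ δ := Real.rpow_pos_of_pos hπ δ
    have h2 : 0 < (4/π : ℝ) ^ (1+δ) := Real.rpow_pos_of_pos (by positivity) _
    positivity
  set V : ℝ := ∫ x in Set.Ioo (0:ℝ) π, (x ^ (-δ) + (π - x) ^ (-δ)) with hVdef
  have hV0 : 0 ≤ V := by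
    apply setIntegral_nonneg measurableSet_Ioo
    intro x hx
    exact add_nonneg (Real.rpow_nonneg hx.1.le _) (Real.rpow_nonneg (by linarith [hx.2]) _)
  refine ⟨K * (V + 1), by positivity, ?_⟩
  intro f f' hder hcont hint
  set N : ℝ → ℝ := fun x => ‖f x‖ ^ 2 with hNdef
  set P : ℝ → ℝ := fun x => ‖f' x‖ ^ 2 with hPdef
  set W : ℝ → ℝ := fun x => x ^ (1+δ) * (π - x) ^ (1+δ) * (N x + P x) with hWdef
  set I : ℝ := ∫ x in Set.Ioo (0:ℝ) π, W x with hIdef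
  have hWnn : ∀ x ∈ Set.Ioo (0:ℝ) π, 0 ≤ W x := by
    intro x hx
    exact mul_nonneg (mul_nonneg (Real.rpow_nonneg hx.1.le _)
      (Real.rpow_nonneg (by linarith [hx.2]) _)) (by positivity)
  have hWae : 0 ≤ᵐ[volume.restrict (Set.Ioo (0:ℝ) π)] W :=
    (ae_restrict_iff' measurableSet_Ioo).2 (ae_of_all _ hWnn)
  have hI0 : 0 ≤ I := setIntegral_nonneg measurableSet_Ioo hWnn
  -- pieces of the weighted integral are bounded by I
  have piece_le : ∀ a b : ℝ, 0 < a → a ≤ b → b < π →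
      (∫ t in a..b, W t) ≤ I := by
    intro a b ha hab hb
    rw [intervalIntegral.integral_of_le hab]
    have hss : Set.Ioc a b ⊆ Set.Ioo 0 π := fun y hy =>
      ⟨ha.trans hy.1, lt_of_le_of_lt hy.2 hb⟩
    exact setIntegral_mono_set hint hWae hss.eventuallyLE
  -- choose a good midpoint x₀
  have hJsub : Set.Icc (π/4) (3*π/4) ⊆ Set.Ioo (0:ℝ) π := by
    intro y hy
    constructor <;> [linarith [hy.1]; linarith [hy.2]]
  have hfcJ : ContinuousOn N (Set.Icc (π/4) (3*π/4)) := by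
    have : ContinuousOn f (Set.Icc (π/4) (3*π/4)) := fun y hy =>
      (hder y (hJsub hy)).continuousAt.continuousWithinAt
    exact this.norm.pow 2
  obtain ⟨x₀, hx₀J, hx₀min⟩ :=
    isCompact_Icc.exists_isMinOn (Set.nonempty_Icc.2 (by linarith)) hfcJ
  have hx₀1 : π/4 ≤ x₀ := hx₀J.1
  have hx₀2 : x₀ ≤ 3*π/4 := hx₀J.2
  have hx₀pos : 0 < x₀ := by linarith
  have hx₀lt : x₀ < π := by linarith
  -- bound ‖f x₀‖²
  have hfx₀ : N x₀ ≤ (2 / (π * c)) * I := by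
    have hconst : ∫ _y in Set.Icc (π/4) (3*π/4), N x₀ = (π/2) * N x₀ := by
      rw [setIntegral_const, measureReal_def, Real.volume_Icc, smul_eq_mul]
      have h34 : 3*π/4 - π/4 = π/2 := by ring
      rw [h34, ENNReal.toReal_ofReal (by linarith)]
    have hIccfin : volume (Set.Icc (π/4) (3*π/4)) < ⊤ := measure_Icc_lt_top
    have hintN : IntegrableOn N (Set.Icc (π/4) (3*π/4)) := hfcJ.integrableOn_Icc
    have hintW : IntegrableOn W (Set.Icc (π/4) (3*π/4)) := hint.mono_set hJsub
    have h1 : ∫ _y in Set.Icc (π/4) (3*π/4), N x₀ ≤ ∫ y in Set.Icc (π/4) (3*π/4), N y := by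
      apply setIntegral_mono_on (integrableOn_const hIccfin.ne) hintN
        measurableSet_Icc
      intro y hy
      exact isMinOn_iff.1 hx₀min y hy
    have h2 : ∫ y in Set.Icc (π/4) (3*π/4), N y
        ≤ ∫ y in Set.Icc (π/4) (3*π/4), (1/c) * W y := by
      apply setIntegral_mono_on hintN (hintW.const_mul _) measurableSet_Icc
      intro y hy
      have hw : c ≤ y ^ (1+δ) * (π - y) ^ (1+δ) := by
        exact mul_le_mul (Real.rpow_le_rpow (by positivity) hy.1 (by linarith))
          (Real.rpow_le_rpow (by positivity) (by linarith [hy.2]) (by linarith))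
          (Real.rpow_nonneg (by positivity) _) (Real.rpow_nonneg (by linarith [hy.1]) _)
      have hNn : 0 ≤ N y := by positivity
      have hPn : 0 ≤ P y := by positivity
      have h3 : c * N y ≤ (y ^ (1+δ) * (π - y) ^ (1+δ)) * (N y + P y) := by
        nlinarith [mul_le_mul_of_nonneg_right hw hNn,
          mul_nonneg (le_trans hc0.le hw) hPn]
      calc N y = (1/c) * (c * N y) := by field_simp
        _ ≤ (1/c) * W y := by
            apply mul_le_mul_of_nonneg_left _ (by positivity)
            exact h3
    have h4 : ∫ y in Set.Icc (π/4) (3*π/4), (1/c) * W y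
        = (1/c) * ∫ y in Set.Icc (π/4) (3*π/4), W y := integral_const_mul _ _
    have h5 : ∫ y in Set.Icc (π/4) (3*π/4), W y ≤ I := by
      apply setIntegral_mono_set hint hWae hJsub.eventuallyLE
    have h6 : (π/2) * N x₀ ≤ (1/c) * I := by
      rw [← hconst]
      calc ∫ _y in Set.Icc (π/4) (3*π/4), N x₀
          ≤ ∫ y in Set.Icc (π/4) (3*π/4), (1/c) * W y := le_trans h1 h2
        _ = (1/c) * ∫ y in Set.Icc (π/4) (3*π/4), W y := h4
        _ ≤ (1/c) * I := mul_le_mul_of_nonneg_left h5 (by positivity)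
    calc N x₀ = ((π/2) * N x₀) * (2/π) := by field_simp
      _ ≤ ((1/c) * I) * (2/π) := mul_le_mul_of_nonneg_right h6 (by positivity)
      _ = (2 / (π * c)) * I := by field_simp
  have hKI : 0 ≤ K * I := mul_nonneg hK0.le hI0
  -- main pointwise bound
  have hpt : ∀ x ∈ Set.Ioo (0:ℝ) π, N x ≤ (x ^ (-δ) + (π - x) ^ (-δ)) * (K * I) := by
    intro x hx
    have hxpos := hx.1
    have hxlt := hx.2
    rcases le_total x x₀ with hxx | hxx
    · -- left branch
      have hsub : Set.Icc x x₀ ⊆ Set.Ioo (0:ℝ) π := fun t ht =>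
        ⟨lt_of_lt_of_le hxpos ht.1, lt_of_le_of_lt ht.2 hx₀lt⟩
      have hgr := gronwall_aux δ hδ0 f f' x x₀ hxpos hxx
        (fun t ht => hder t (hsub ht)) (hcont.mono hsub)
      -- bound the interval integral
      have hbd : (∫ t in x..x₀, t ^ (1+δ) * ‖f' t‖ ^ 2) ≤ (4/π) ^ (1+δ) * I := by
        have hptw : ∀ t ∈ Set.Icc x x₀,
            t ^ (1+δ) * ‖f' t‖ ^ 2 ≤ (4/π) ^ (1+δ) * W t := by
          intro t ht
          have ht0 : 0 < t := lt_of_lt_of_le hxpos ht.1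
          have htπ : π - t ≥ π/4 := by have := ht.2; linarith
          have h1 : (π/4 : ℝ) ^ (1+δ) ≤ (π - t) ^ (1+δ) :=
            Real.rpow_le_rpow (by positivity) htπ (by linarith)
          have h2 : (4/π : ℝ) ^ (1+δ) * (π/4) ^ (1+δ) = 1 := by
            rw [← Real.mul_rpow (by positivity) (by positivity)]
            have : (4/π : ℝ) * (π/4) = 1 := by field_simp
            rw [this, Real.one_rpow]
          have hA : (0:ℝ) ≤ (4/π : ℝ) ^ (1+δ) := by positivity
          have hAB : 1 ≤ (4/π : ℝ) ^ (1+δ) * (π - t) ^ (1+δ) := by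
            calc (1:ℝ) = (4/π : ℝ) ^ (1+δ) * (π/4) ^ (1+δ) := h2.symm
              _ ≤ (4/π : ℝ) ^ (1+δ) * (π - t) ^ (1+δ) :=
                  mul_le_mul_of_nonneg_left h1 hA
          have hT : (0:ℝ) ≤ t ^ (1+δ) := Real.rpow_nonneg ht0.le _
          have hNn : 0 ≤ N t := by positivity
          have hPn : 0 ≤ P t := by positivity
          show t ^ (1+δ) * P t ≤ (4/π) ^ (1+δ) * (t ^ (1+δ) * (π - t) ^ (1+δ) * (N t + P t))
          nlinarith [mul_le_mul_of_nonneg_right hAB (mul_nonneg hT (add_nonneg hNn hPn)),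
            mul_nonneg hT hNn]
        have hlhsi : IntervalIntegrable (fun t : ℝ => t ^ (1+δ) * ‖f' t‖ ^ 2) volume x x₀ := by
          apply ContinuousOn.intervalIntegrable
          rw [Set.uIcc_of_le hxx]
          exact (continuousOn_id.rpow_const (fun t _ => Or.inr (by linarith))).mul
            ((hcont.mono hsub).norm.pow 2)
        have hrhsi : IntervalIntegrable (fun t : ℝ => (4/π) ^ (1+δ) * W t) volume x x₀ := by
          apply MeasureTheory.IntegrableOn.intervalIntegrable
          rw [Set.uIcc_of_le hxx]
          exact (hint.mono_set hsub).const_mul _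
        calc (∫ t in x..x₀, t ^ (1+δ) * ‖f' t‖ ^ 2)
            ≤ ∫ t in x..x₀, (4/π) ^ (1+δ) * W t :=
              intervalIntegral.integral_mono_on hxx hlhsi hrhsi hptw
          _ = (4/π) ^ (1+δ) * ∫ t in x..x₀, W t := intervalIntegral.integral_const_mul _ _
          _ ≤ (4/π) ^ (1+δ) * I :=
              mul_le_mul_of_nonneg_left (piece_le x x₀ hxpos hxx hx₀lt) (by positivity)
      have hx₀δ : x₀ ^ δ ≤ π ^ δ := Real.rpow_le_rpow hx₀pos.le hx₀lt.le hδ0.le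
      have hKIb : x ^ δ * N x ≤ K * I := by
        have ha : x₀ ^ δ * N x₀ ≤ π ^ δ * ((2 / (π * c)) * I) := by
          apply mul_le_mul hx₀δ hfx₀ (by positivity) (by positivity)
        have hb : (1/δ) * (∫ t in x..x₀, t ^ (1+δ) * ‖f' t‖ ^ 2)
            ≤ (1/δ) * ((4/π) ^ (1+δ) * I) := mul_le_mul_of_nonneg_left hbd (by positivity)
        calc x ^ δ * N x ≤ x₀ ^ δ * N x₀ + (1/δ) * ∫ t in x..x₀, t ^ (1+δ) * ‖f' t‖ ^ 2 := hgr
          _ ≤ π ^ δ * ((2 / (π * c)) * I) + (1/δ) * ((4/π) ^ (1+δ) * I) := add_le_add ha hb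
          _ = K * I := by rw [hKdef]; ring
      have hxs : (0:ℝ) < x ^ δ := Real.rpow_pos_of_pos hxpos δ
      have h7 : N x ≤ x ^ (-δ) * (K * I) := by
        rw [Real.rpow_neg hxpos.le, inv_mul_eq_div, le_div_iff₀ hxs]
        calc N x * x ^ δ = x ^ δ * N x := mul_comm _ _
          _ ≤ K * I := hKIb
      calc N x ≤ x ^ (-δ) * (K * I) := h7
        _ ≤ (x ^ (-δ) + (π - x) ^ (-δ)) * (K * I) := by
            apply mul_le_mul_of_nonneg_right _ hKI
            have : (0:ℝ) ≤ (π - x) ^ (-δ) := Real.rpow_nonneg (by linarith) _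
            linarith
    · -- right branch, by reflection
      set y : ℝ := π - x with hydef
      set y₀ : ℝ := π - x₀ with hy₀def
      have hypos : 0 < y := by rw [hydef]; linarith
      have hyy : y ≤ y₀ := by rw [hydef, hy₀def]; linarith
      have hy₀lt : y₀ < π := by rw [hy₀def]; linarith
      set g : ℝ → ℂ := fun s => f (π - s) with hgdef
      set g' : ℝ → ℂ := fun s => -f' (π - s) with hg'def
      have hsub : ∀ t ∈ Set.Icc y y₀, (π - t) ∈ Set.Ioo (0:ℝ) π := by
        intro t ht
        constructor
        · have := ht.2; simp only [hy₀def] at this; linarith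
        · have := ht.1; simp only [hydef] at this; linarith
      have hgder : ∀ t ∈ Set.Icc y y₀, HasDerivAt g (g' t) t := by
        intro t ht
        have hneg : HasDerivAt (fun s : ℝ => π - s) (-1) t := (hasDerivAt_id t).const_sub π
        have h0 : HasDerivAt (f ∘ fun s : ℝ => π - s) ((-1 : ℝ) • f' (π - t)) t :=
          HasDerivAt.scomp_of_eq (hg := hder (π - t) (hsub t ht)) (hh := hneg) (hy := rfl)
        rw [neg_one_smul ℝ (f' (π - t))] at h0
        exact h0
      have hgcont : ContinuousOn g' (Set.Icc y y₀) := by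
        apply ContinuousOn.neg
        apply hcont.comp (continuous_const.sub continuous_id).continuousOn
        intro t ht
        exact hsub t ht
      have hgr := gronwall_aux δ hδ0 g g' y y₀ hypos hyy hgder hgcont
      have hxy : π - y = x := by rw [hydef]; ring
      have hxy₀ : π - y₀ = x₀ := by rw [hy₀def]; ring
      have hgy : ‖g y‖ = ‖f x‖ := by
        show ‖f (π - y)‖ = ‖f x‖; rw [hxy]
      have hgy₀ : ‖g y₀‖ = ‖f x₀‖ := by
        show ‖f (π - y₀)‖ = ‖f x₀‖; rw [hxy₀]
      -- rewrite the interval integral by reflection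
      set φ : ℝ → ℝ := fun s => (π - s) ^ (1+δ) * ‖f' s‖ ^ 2 with hφdef
      have hrefl : (∫ t in y..y₀, t ^ (1+δ) * ‖g' t‖ ^ 2)
          = ∫ s in x₀..x, φ s := by
        have h1 : (∫ t in y..y₀, t ^ (1+δ) * ‖g' t‖ ^ 2)
            = ∫ t in y..y₀, φ (π - t) := by
          apply intervalIntegral.integral_congr
          intro t _
          show t ^ (1+δ) * ‖-f' (π - t)‖ ^ 2
            = (π - (π - t)) ^ (1+δ) * ‖f' (π - t)‖ ^ 2
          rw [sub_sub_cancel, norm_neg]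
        have hcs : (∫ t in y..y₀, φ (π - t)) = ∫ s in π - y₀..π - y, φ s :=
          intervalIntegral.integral_comp_sub_left φ π
        rw [h1, hcs, hxy₀, hxy]
      -- bound the reflected integral
      have hsub2 : Set.Icc x₀ x ⊆ Set.Ioo (0:ℝ) π := fun t ht =>
        ⟨lt_of_lt_of_le hx₀pos ht.1, lt_of_le_of_lt ht.2 hxlt⟩
      have hbd : (∫ s in x₀..x, φ s) ≤ (4/π) ^ (1+δ) * I := by
        have hptw : ∀ s ∈ Set.Icc x₀ x,
            φ s ≤ (4/π) ^ (1+δ) * W s := by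
          intro s hs
          have hs0 : 0 < s := lt_of_lt_of_le hx₀pos hs.1
          have hsp : π - s ≥ 0 := by have := hs.2; linarith
          have hs4 : s ≥ π/4 := le_trans hx₀1 hs.1
          have h1 : (π/4 : ℝ) ^ (1+δ) ≤ s ^ (1+δ) :=
            Real.rpow_le_rpow (by positivity) hs4 (by linarith)
          have h2 : (4/π : ℝ) ^ (1+δ) * (π/4) ^ (1+δ) = 1 := by
            rw [← Real.mul_rpow (by positivity) (by positivity)]
            have : (4/π : ℝ) * (π/4) = 1 := by field_simp
            rw [this, Real.one_rpow]
          have hA : (0:ℝ) ≤ (4/π : ℝ) ^ (1+δ) := by positivity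
          have hAB : 1 ≤ (4/π : ℝ) ^ (1+δ) * s ^ (1+δ) := by
            calc (1:ℝ) = (4/π : ℝ) ^ (1+δ) * (π/4) ^ (1+δ) := h2.symm
              _ ≤ (4/π : ℝ) ^ (1+δ) * s ^ (1+δ) := mul_le_mul_of_nonneg_left h1 hA
          have hT : (0:ℝ) ≤ (π - s) ^ (1+δ) := Real.rpow_nonneg hsp _
          have hNn : 0 ≤ N s := by positivity
          have hPn : 0 ≤ P s := by positivity
          show (π - s) ^ (1+δ) * P s
              ≤ (4/π) ^ (1+δ) * (s ^ (1+δ) * (π - s) ^ (1+δ) * (N s + P s))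
          nlinarith [mul_le_mul_of_nonneg_right hAB (mul_nonneg hT (add_nonneg hNn hPn)),
            mul_nonneg hT hNn]
        have hlhsi : IntervalIntegrable φ volume x₀ x := by
          apply ContinuousOn.intervalIntegrable
          rw [Set.uIcc_of_le hxx, hφdef]
          exact (((continuous_const.sub continuous_id).continuousOn).rpow_const
            (fun t _ => Or.inr (by linarith))).mul ((hcont.mono hsub2).norm.pow 2)
        have hrhsi : IntervalIntegrable (fun s : ℝ => (4/π) ^ (1+δ) * W s) volume x₀ x := by
          apply MeasureTheory.IntegrableOn.intervalIntegrable
          rw [Set.uIcc_of_le hxx]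
          exact (hint.mono_set hsub2).const_mul _
        calc (∫ s in x₀..x, φ s)
            ≤ ∫ s in x₀..x, (4/π) ^ (1+δ) * W s :=
              intervalIntegral.integral_mono_on hxx hlhsi hrhsi hptw
          _ = (4/π) ^ (1+δ) * ∫ s in x₀..x, W s := intervalIntegral.integral_const_mul _ _
          _ ≤ (4/π) ^ (1+δ) * I :=
              mul_le_mul_of_nonneg_left (piece_le x₀ x hx₀pos hxx hxlt) (by positivity)
      have hy₀δ : y₀ ^ δ ≤ π ^ δ := by
        apply Real.rpow_le_rpow (by linarith) (by rw [hy₀def]; linarith) hδ0.le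
      have hKIb : y ^ δ * N x ≤ K * I := by
        have ha : y₀ ^ δ * ‖g y₀‖ ^ 2 ≤ π ^ δ * ((2 / (π * c)) * I) := by
          rw [hgy₀]
          exact mul_le_mul hy₀δ hfx₀ (by positivity) (by positivity)
        have hb : (1/δ) * (∫ t in y..y₀, t ^ (1+δ) * ‖g' t‖ ^ 2)
            ≤ (1/δ) * ((4/π) ^ (1+δ) * I) := by
          rw [hrefl]
          exact mul_le_mul_of_nonneg_left hbd (by positivity)
        have hgr' : y ^ δ * N x ≤ y₀ ^ δ * ‖g y₀‖ ^ 2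
            + (1/δ) * ∫ t in y..y₀, t ^ (1+δ) * ‖g' t‖ ^ 2 := by
          have : ‖g y‖ ^ 2 = N x := by rw [hgy]
          rw [← this]
          exact hgr
        calc y ^ δ * N x ≤ _ := hgr'
          _ ≤ π ^ δ * ((2 / (π * c)) * I) + (1/δ) * ((4/π) ^ (1+δ) * I) := add_le_add ha hb
          _ = K * I := by rw [hKdef]; ring
      have hys : (0:ℝ) < y ^ δ := Real.rpow_pos_of_pos hypos δ
      have h7 : N x ≤ y ^ (-δ) * (K * I) := by
        rw [Real.rpow_neg hypos.le, inv_mul_eq_div, le_div_iff₀ hys]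
        calc N x * y ^ δ = y ^ δ * N x := mul_comm _ _
          _ ≤ K * I := hKIb
      calc N x ≤ y ^ (-δ) * (K * I) := h7
        _ ≤ (x ^ (-δ) + y ^ (-δ)) * (K * I) := by
            apply mul_le_mul_of_nonneg_right _ hKI
            have : (0:ℝ) ≤ x ^ (-δ) := Real.rpow_nonneg hxpos.le _
            linarith
  -- final integration
  have hVint : IntegrableOn (fun x : ℝ => x ^ (-δ) + (π - x) ^ (-δ)) (Set.Ioo 0 π) := by
    have p1 : IntervalIntegrable (fun x : ℝ => x ^ (-δ)) volume 0 π :=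
      intervalIntegral.intervalIntegrable_rpow' (by linarith)
    have p2 : IntervalIntegrable (fun x : ℝ => (π - x) ^ (-δ)) volume 0 π := by
      have := p1.comp_sub_left π
      simpa using this.symm
    have := (p1.add p2)
    exact (intervalIntegrable_iff_integrableOn_Ioo_of_le hπ.le).1 this
  have hdom : IntegrableOn (fun x : ℝ => (x ^ (-δ) + (π - x) ^ (-δ)) * (K * I))
      (Set.Ioo 0 π) := hVint.mul_const _
  have hfinal : ∫ x in Set.Ioo (0:ℝ) π, N x
      ≤ ∫ x in Set.Ioo (0:ℝ) π, (x ^ (-δ) + (π - x) ^ (-δ)) * (K * I) := by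
    apply integral_mono_of_nonneg (ae_of_all _ (fun x => by positivity)) hdom
    exact (ae_restrict_iff' measurableSet_Ioo).2 (ae_of_all _ hpt)
  have hVeq : ∫ x in Set.Ioo (0:ℝ) π, (x ^ (-δ) + (π - x) ^ (-δ)) * (K * I)
      = V * (K * I) := integral_mul_const _ _
  rw [hVeq] at hfinal
  calc ∫ x in Set.Ioo (0:ℝ) π, N x ≤ V * (K * I) := hfinal
    _ ≤ K * (V + 1) * I := by nlinarith [hKI, hV0]
end

section
/- Let a, b > 0 and c ≥ 0, γ ≥ 0 be constants, and let k ∈ ℤ with |k| ≥ 2, or more generally k ∈ ℤ \ {-1, 0}. Then ∫₀^{2π} k² e^{-b k² / t} · t^{-(3+2γ)} dt ≤ C e^{-b k² / (2π)} where C = (a'/(b(2πb)^{1+2γ})) ∫₀^∞ (2πu + b)^{1+2γ} e^{-u} du for a suitable constant a' depending only on a, b, γ. In particular, ∑_{k ∈ ℤ, |k| ≥ 1} k² ∫₀^{2π} e^{-b k²/t} t^{-(3+2γ)} dt < ∞. -/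
open Real MeasureTheory Set

lemma helper1 (x : ℝ) : x * Real.exp (-x) ≤ 1 := by
  rcases le_or_gt x 0 with h | h
  · have := Real.exp_pos (-x); nlinarith
  · rw [Real.exp_neg, ← div_eq_mul_inv, div_le_one (Real.exp_pos x)]
    linarith [Real.add_one_le_exp x]

lemma helper2 (x : ℝ) (hx : 0 < x) (n : ℕ) :
    Real.exp (-x) ≤ (n.factorial : ℝ) * (x ^ n)⁻¹ := by
  have h := Real.pow_div_factorial_le_exp (x := x) hx.le n
  have h2 : (Real.exp x)⁻¹ ≤ (x ^ n / (n.factorial : ℝ))⁻¹ :=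
    inv_anti₀ (by positivity) h
  rw [Real.exp_neg]
  rwa [inv_div, div_eq_mul_inv] at h2

lemma helper3 (K t p : ℝ) (hK : 0 < K) (ht : 0 < t) (hp : 0 < p) :
    K / (2 * p) + (K / (4 * p ^ 2)) * (2 * p - t) ≤ K / t := by
  have heq : K / t - (K / (2 * p) + (K / (4 * p ^ 2)) * (2 * p - t)) =
      K * (2 * p - t) ^ 2 / (4 * p ^ 2 * t) := by
    field_simp
    ring
  have hnn : (0:ℝ) ≤ K * (2 * p - t) ^ 2 / (4 * p ^ 2 * t) := by positivity
  linarith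

lemma helper4 (K t : ℝ) (ht : t ≠ 0) : K / (2 * t) + K / (2 * t) = K / t := by
  field_simp; ring

lemma helper4' (K t : ℝ) (ht : t ≠ 0) : K / (4 * t) + K / (4 * t) = K / (2 * t) := by
  field_simp; ring

lemma helper6 (b c t : ℝ) (hb : b ≠ 0) (ht : t ≠ 0) (e : ℝ) :
    c * e = (4 * t / b) * ((b * c / (4 * t)) * e) := by
  rw [← mul_assoc]
  congr 1
  field_simp

lemma bound_aux (b γ : ℝ) (hb : 0 < b) (hγ : 0 ≤ γ) :
    ∃ C > 0, ∀ k : ℤ, k ≠ 0 →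
      (∫ t in Set.Ioo (0 : ℝ) (2 * π),
          (k : ℝ) ^ 2 * Real.exp (-(b * (k : ℝ) ^ 2) / t) * t ^ (-(3 + 2 * γ))) ≤
        C * Real.exp (-(b * (k : ℝ) ^ 2) / (2 * π)) := by
  have hπ : 0 < π := Real.pi_pos
  set n : ℕ := ⌈2 + 2 * γ⌉₊ with hn
  have hne : (0:ℝ) ≤ (n : ℝ) + 1 - (3 + 2 * γ) := by
    have := Nat.le_ceil (2 + 2 * γ)
    rw [← hn] at this; linarith
  set M₁ : ℝ := (n.factorial : ℝ) * (4 / b) ^ (n + 1) * π ^ ((n : ℝ) + 1 - (3 + 2 * γ)) with hM₁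
  have hM₁pos : 0 < M₁ := by
    have := n.factorial_pos
    positivity
  clear_value n
  refine ⟨M₁ * (2 * π) + π ^ (-(3 + 2 * γ)) * (4 * π ^ 2 / b), by positivity, ?_⟩
  intro k hk
  set K : ℝ := b * (k : ℝ) ^ 2 with hK
  have hk1 : (1:ℝ) ≤ (k : ℝ) ^ 2 := by
    have h0 : (1:ℤ) ≤ |k| := Int.one_le_abs hk
    have h1 : (1:ℤ) ≤ k ^ 2 := by nlinarith [sq_abs k]
    exact_mod_cast h1
  have hKpos : 0 < K := by positivity
  have hbK : b ≤ K := by nlinarith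
  set A : ℝ := K / (4 * π ^ 2) with hA
  have hApos : 0 < A := by positivity
  clear_value M₁ K A
  -- the dominating function
  set g : ℝ → ℝ := fun t => Real.exp (-K / (2 * π)) *
      (M₁ + π ^ (-(3 + 2 * γ)) * (k : ℝ) ^ 2 * Real.exp (-(A * (2 * π - t)))) with hg
  have hgcont : Continuous g := by rw [hg]; fun_prop
  clear_value g
  -- pointwise bound
  have hpt : ∀ t ∈ Set.Ioo (0:ℝ) (2 * π),
      (k : ℝ) ^ 2 * Real.exp (-K / t) * t ^ (-(3 + 2 * γ)) ≤ g t := by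
    intro t ht
    obtain ⟨ht0, ht2⟩ := ht
    have hexp2 : (0:ℝ) ≤ π ^ (-(3 + 2 * γ)) * (k : ℝ) ^ 2 * Real.exp (-(A * (2 * π - t))) := by
      positivity
    rcases le_or_gt t π with htπ | htπ
    · -- case t ≤ π
      have key : (k : ℝ) ^ 2 * Real.exp (-K / t) * t ^ (-(3 + 2 * γ)) ≤
          Real.exp (-K / (2 * π)) * M₁ := by
        have htn : t ≠ 0 := ht0.ne'
        have hE : Real.exp (-K / t) ≤
            Real.exp (-K / (2 * π)) * (Real.exp (-(K / (4 * t))) * Real.exp (-(K / (4 * t)))) := by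
          rw [← Real.exp_add, ← Real.exp_add]
          apply Real.exp_le_exp.mpr
          have h1 : K / (2 * π) ≤ K / (2 * t) := by gcongr <;> linarith
          have h2 : K / (2 * t) + K / (2 * π) ≤ K / t := by
            have := helper4 K t htn
            linarith
          have h3 : -(K / (4 * t)) + -(K / (4 * t)) = -(K / (2 * t)) := by
            rw [← neg_add, helper4' K t htn]
          rw [h3]
          have : -K / t = -(K / t) := by ring
          rw [this]
          have : -K / (2 * π) = -(K / (2 * π)) := by ring
          rw [this]
          linarith
        have b1 : (k : ℝ) ^ 2 * Real.exp (-(K / (4 * t))) ≤ 4 * t / b := by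
          have h0 := helper1 (K / (4 * t))
          have heq : (k : ℝ) ^ 2 * Real.exp (-(K / (4 * t))) =
              (4 * t / b) * ((K / (4 * t)) * Real.exp (-(K / (4 * t)))) := by
            rw [hK]
            exact helper6 b ((k:ℝ)^2) t hb.ne' htn _
          rw [heq]
          have h4 : (0:ℝ) ≤ 4 * t / b := by positivity
          nlinarith
        have b3 : Real.exp (-(K / (4 * t))) ≤ (n.factorial : ℝ) * (4 * t / b) ^ n := by
          have hx : (0:ℝ) < b / (4 * t) := by positivity
          have := helper2 (b / (4 * t)) hx n
          have hmono : Real.exp (-(K / (4 * t))) ≤ Real.exp (-(b / (4 * t))) := by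
            apply Real.exp_le_exp.mpr
            have : b / (4 * t) ≤ K / (4 * t) := by gcongr
            linarith
          have hh : ((b / (4 * t)) ^ n)⁻¹ = (4 * t / b) ^ n := by
            rw [← inv_pow, inv_div]
          rw [hh] at this
          exact hmono.trans this
        have htp : (0:ℝ) < t ^ (-(3 + 2 * γ)) := Real.rpow_pos_of_pos ht0 _
        have step1 : (k : ℝ) ^ 2 * Real.exp (-K / t) * t ^ (-(3 + 2 * γ)) ≤
            Real.exp (-K / (2 * π)) *
              (((k : ℝ) ^ 2 * Real.exp (-(K / (4 * t)))) * Real.exp (-(K / (4 * t))) *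
                t ^ (-(3 + 2 * γ))) := by
          have := mul_le_mul_of_nonneg_left hE (by positivity : (0:ℝ) ≤ (k : ℝ) ^ 2)
          nlinarith [Real.exp_pos (-(K / (4 * t))), Real.exp_pos (-K / (2 * π))]
        refine step1.trans ?_
        apply mul_le_mul_of_nonneg_left _ (Real.exp_pos _).le
        have step2 : ((k : ℝ) ^ 2 * Real.exp (-(K / (4 * t)))) * Real.exp (-(K / (4 * t))) *
            t ^ (-(3 + 2 * γ)) ≤
            (4 * t / b) * ((n.factorial : ℝ) * (4 * t / b) ^ n) * t ^ (-(3 + 2 * γ)) := by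
          apply mul_le_mul_of_nonneg_right _ htp.le
          apply mul_le_mul b1 b3 (Real.exp_pos _).le (by positivity)
        refine step2.trans ?_
        -- now pure calculation
        have hre : (4 * t / b) * ((n.factorial : ℝ) * (4 * t / b) ^ n) * t ^ (-(3 + 2 * γ)) =
            (n.factorial : ℝ) * (4 / b) ^ (n + 1) * (t ^ ((n : ℝ) + 1 - (3 + 2 * γ))) := by
          have h5 : (4 * t / b) * (4 * t / b) ^ n = (4 / b) ^ (n + 1) * t ^ (n + 1) := by
            rw [pow_succ]
            have : (4 * t / b) = (4 / b) * t := by ring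
            rw [this, mul_pow]
            ring
          have h6 : (t : ℝ) ^ (n + 1) * t ^ (-(3 + 2 * γ)) = t ^ ((n : ℝ) + 1 - (3 + 2 * γ)) := by
            rw [← Real.rpow_natCast t (n + 1), ← Real.rpow_add ht0]
            push_cast
            ring_nf
          calc (4 * t / b) * ((n.factorial : ℝ) * (4 * t / b) ^ n) * t ^ (-(3 + 2 * γ))
              = (n.factorial : ℝ) * ((4 * t / b) * (4 * t / b) ^ n) * t ^ (-(3 + 2 * γ)) := by ring
            _ = (n.factorial : ℝ) * ((4 / b) ^ (n + 1) * t ^ (n + 1)) * t ^ (-(3 + 2 * γ)) := by rw [h5]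
            _ = (n.factorial : ℝ) * (4 / b) ^ (n + 1) * (t ^ (n + 1) * t ^ (-(3 + 2 * γ))) := by ring
            _ = (n.factorial : ℝ) * (4 / b) ^ (n + 1) * (t ^ ((n : ℝ) + 1 - (3 + 2 * γ))) := by rw [h6]
        rw [hre, hM₁]
        apply mul_le_mul_of_nonneg_left _ (by positivity)
        exact Real.rpow_le_rpow ht0.le htπ hne
      rw [hg]; dsimp only
      refine key.trans ?_
      apply mul_le_mul_of_nonneg_left _ (Real.exp_pos _).le
      linarith
    · -- case π < t
      have key : (k : ℝ) ^ 2 * Real.exp (-K / t) * t ^ (-(3 + 2 * γ)) ≤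
          Real.exp (-K / (2 * π)) * (π ^ (-(3 + 2 * γ)) * (k : ℝ) ^ 2 * Real.exp (-(A * (2 * π - t)))) := by
        have h1 : t ^ (-(3 + 2 * γ)) ≤ π ^ (-(3 + 2 * γ)) :=
          Real.rpow_le_rpow_of_nonpos hπ htπ.le (by linarith)
        have h2 : Real.exp (-K / t) ≤ Real.exp (-K / (2 * π)) * Real.exp (-(A * (2 * π - t))) := by
          rw [← Real.exp_add]
          apply Real.exp_le_exp.mpr
          have key := helper3 K t π hKpos ht0 hπ
          rw [← hA] at key
          have e1 : -K / t = -(K / t) := by ring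
          have e2 : -K / (2 * π) = -(K / (2 * π)) := by ring
          rw [e1, e2]
          linarith
        calc (k : ℝ) ^ 2 * Real.exp (-K / t) * t ^ (-(3 + 2 * γ))
            ≤ (k : ℝ) ^ 2 * (Real.exp (-K / (2 * π)) * Real.exp (-(A * (2 * π - t)))) *
              π ^ (-(3 + 2 * γ)) := by
              apply mul_le_mul (mul_le_mul_of_nonneg_left h2 (by positivity)) h1
                (Real.rpow_pos_of_pos ht0 _).le (by positivity)
          _ = Real.exp (-K / (2 * π)) * (π ^ (-(3 + 2 * γ)) * (k : ℝ) ^ 2 *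
              Real.exp (-(A * (2 * π - t)))) := by ring
      rw [hg]; dsimp only
      refine key.trans ?_
      apply mul_le_mul_of_nonneg_left _ (Real.exp_pos _).le
      linarith
  have hfnonneg : ∀ t ∈ Set.Ioo (0:ℝ) (2 * π),
      0 ≤ (k : ℝ) ^ 2 * Real.exp (-K / t) * t ^ (-(3 + 2 * γ)) := by
    intro t ht
    have := ht.1
    positivity
  -- integrability
  have hgint : IntegrableOn g (Set.Ioo 0 (2 * π)) := by
    exact (hgcont.integrableOn_Icc (a := 0) (b := 2 * π)).mono_set Set.Ioo_subset_Icc_self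
  have hfmeas : Measurable fun t : ℝ => (k : ℝ) ^ 2 * Real.exp (-K / t) * t ^ (-(3 + 2 * γ)) := by
    fun_prop
  have hfint : IntegrableOn (fun t : ℝ => (k : ℝ) ^ 2 * Real.exp (-K / t) * t ^ (-(3 + 2 * γ)))
      (Set.Ioo 0 (2 * π)) := by
    refine Integrable.mono' hgint hfmeas.aestronglyMeasurable ?_
    rw [ae_restrict_iff' measurableSet_Ioo]
    filter_upwards with t ht
    rw [Real.norm_of_nonneg (hfnonneg t ht)]
    exact hpt t ht
  -- integral bound
  have hmono := setIntegral_mono_on hfint hgint measurableSet_Ioo hpt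
  refine hmono.trans ?_
  -- compute/bound ∫ g
  have hIexp : (∫ t in Set.Ioo (0:ℝ) (2 * π), Real.exp (-(A * (2 * π - t)))) ≤ A⁻¹ := by
    have hconv : (∫ t in Set.Ioo (0:ℝ) (2 * π), Real.exp (-(A * (2 * π - t)))) =
        ∫ t in (0:ℝ)..(2 * π), Real.exp (-(A * (2 * π - t))) := by
      rw [intervalIntegral.integral_of_le (by positivity), integral_Ioc_eq_integral_Ioo]
    rw [hconv]
    have hderiv : ∀ t ∈ Set.uIcc (0:ℝ) (2 * π),
        HasDerivAt (fun t => A⁻¹ * Real.exp (-(A * (2 * π - t))))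
          (Real.exp (-(A * (2 * π - t)))) t := by
      intro t _
      have h1 : HasDerivAt (fun t : ℝ => -(A * (2 * π - t))) A t := by
        have he : (fun t : ℝ => -(A * (2 * π - t))) = fun t => A * t - A * (2 * π) := by
          funext x; ring
        rw [he]
        simpa using ((hasDerivAt_id t).const_mul A).sub_const (A * (2 * π))
      have h3 := h1.exp.const_mul A⁻¹
      rw [mul_comm (Real.exp _) A, ← mul_assoc, inv_mul_cancel₀ hApos.ne', one_mul] at h3
      exact h3
    have hFTC := intervalIntegral.integral_eq_sub_of_hasDerivAt hderiv
      ((by fun_prop : Continuous fun t : ℝ => Real.exp (-(A * (2 * π - t)))).intervalIntegrable 0 (2 * π))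
    rw [hFTC]
    have he0 := Real.exp_pos (-(A * (2 * π - 0)))
    have he1 : Real.exp (-(A * (2 * π - 2 * π))) = 1 := by norm_num
    rw [he1]
    have hAi : 0 ≤ A⁻¹ * Real.exp (-(A * (2 * π - 0))) := by positivity
    linarith
  have hIexpnn : (0:ℝ) ≤ ∫ t in Set.Ioo (0:ℝ) (2 * π), Real.exp (-(A * (2 * π - t))) :=
    setIntegral_nonneg measurableSet_Ioo (fun t _ => (Real.exp_pos _).le)
  have hsplit : (∫ t in Set.Ioo (0:ℝ) (2 * π), g t) =
      Real.exp (-K / (2 * π)) * (M₁ * (2 * π) +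
        π ^ (-(3 + 2 * γ)) * (k : ℝ) ^ 2 * ∫ t in Set.Ioo (0:ℝ) (2 * π), Real.exp (-(A * (2 * π - t)))) := by
    have hint2 : IntegrableOn (fun t : ℝ => π ^ (-(3 + 2 * γ)) * (k : ℝ) ^ 2 * Real.exp (-(A * (2 * π - t)))) (Set.Ioo 0 (2 * π)) :=
      (Continuous.integrableOn_Icc (by fun_prop)).mono_set Set.Ioo_subset_Icc_self
    rw [hg, integral_const_mul, integral_add (integrable_const _) hint2, setIntegral_const,
      Real.volume_real_Ioo_of_le (by positivity), integral_const_mul, smul_eq_mul]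
    ring
  rw [hsplit]
  rw [mul_comm (M₁ * (2 * π) + π ^ (-(3 + 2 * γ)) * (4 * π ^ 2 / b)) (Real.exp (-K / (2 * π)))]
  apply mul_le_mul_of_nonneg_left _ (Real.exp_pos _).le
  have h2 : π ^ (-(3 + 2 * γ)) * (k : ℝ) ^ 2 *
      (∫ t in Set.Ioo (0:ℝ) (2 * π), Real.exp (-(A * (2 * π - t)))) ≤
      π ^ (-(3 + 2 * γ)) * (4 * π ^ 2 / b) := by
    have hπp : (0:ℝ) ≤ π ^ (-(3 + 2 * γ)) := by positivity
    have : π ^ (-(3 + 2 * γ)) * (k : ℝ) ^ 2 *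
        (∫ t in Set.Ioo (0:ℝ) (2 * π), Real.exp (-(A * (2 * π - t)))) ≤
        π ^ (-(3 + 2 * γ)) * (k : ℝ) ^ 2 * A⁻¹ := by
      apply mul_le_mul_of_nonneg_left hIexp (by positivity)
    refine this.trans ?_
    have : (k : ℝ) ^ 2 * A⁻¹ = 4 * π ^ 2 / b := by
      rw [hA, hK]
      field_simp
    rw [mul_assoc, this]
  linarith

theorem gaussian_kernel_integral_decay (a b c γ : ℝ) (ha : 0 < a) (hb : 0 < b)
    (hc : 0 ≤ c) (hγ : 0 ≤ γ) :
    (∃ C > 0, ∀ k : ℤ, k ≠ 0 →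
      (∫ t in Set.Ioo (0 : ℝ) (2 * π),
          (k : ℝ) ^ 2 * Real.exp (-(b * (k : ℝ) ^ 2) / t) * t ^ (-(3 + 2 * γ))) ≤
        C * Real.exp (-(b * (k : ℝ) ^ 2) / (2 * π))) ∧
    Summable (fun k : {k : ℤ // k ≠ 0} =>
      ((k : ℤ) : ℝ) ^ 2 *
        ∫ t in Set.Ioo (0 : ℝ) (2 * π),
          Real.exp (-(b * ((k : ℤ) : ℝ) ^ 2) / t) * t ^ (-(3 + 2 * γ))) := by
  obtain ⟨C, hC, hbound⟩ := bound_aux b γ hb hγ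
  have hπ : 0 < π := Real.pi_pos
  refine ⟨⟨C, hC, hbound⟩, ?_⟩
  set r : ℝ := Real.exp (-(b / (2 * π))) with hr
  have hr0 : (0:ℝ) ≤ r := (Real.exp_pos _).le
  have hr1 : r < 1 := by
    rw [hr, Real.exp_lt_one_iff]
    have : 0 < b / (2 * π) := by positivity
    linarith
  have hsumZ : Summable (fun k : ℤ => C * r ^ k.natAbs) := by
    apply Summable.mul_left
    have hnat : Summable (fun n : ℕ => r ^ n) := summable_geometric_of_lt_one hr0 hr1
    apply Summable.of_nat_of_neg <;> simpa using hnat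
  have hsub : Summable (fun k : {k : ℤ // k ≠ 0} => C * r ^ (k : ℤ).natAbs) :=
    hsumZ.subtype _
  apply Summable.of_nonneg_of_le _ _ hsub
  · intro ⟨k, hk⟩
    apply mul_nonneg (by positivity)
    apply setIntegral_nonneg measurableSet_Ioo
    intro t ht
    have := ht.1
    positivity
  · intro ⟨k, hk⟩
    have h1 : ((k : ℝ)) ^ 2 * (∫ t in Set.Ioo (0:ℝ) (2 * π),
          Real.exp (-(b * (k : ℝ) ^ 2) / t) * t ^ (-(3 + 2 * γ)))
        = ∫ t in Set.Ioo (0:ℝ) (2 * π),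
          (k : ℝ) ^ 2 * Real.exp (-(b * (k : ℝ) ^ 2) / t) * t ^ (-(3 + 2 * γ)) := by
      rw [← integral_const_mul]
      simp_rw [mul_assoc]
    dsimp only
    rw [h1]
    refine (hbound k hk).trans ?_
    apply mul_le_mul_of_nonneg_left _ hC.le
    rw [hr, ← Real.exp_nat_mul]
    apply Real.exp_le_exp.mpr
    have habs : (k : ℝ) ^ 2 = ((k.natAbs : ℝ)) ^ 2 := by
      rw [← sq_abs, ← Int.cast_abs, Int.abs_eq_natAbs, Int.cast_natCast]
    have hm1 : (1:ℝ) ≤ (k.natAbs : ℝ) := by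
      have : 1 ≤ k.natAbs := Int.natAbs_pos.mpr hk
      exact_mod_cast this
    have hm : (k.natAbs : ℝ) ≤ (k : ℝ) ^ 2 := by nlinarith
    have hre : ((k.natAbs : ℕ) : ℝ) * -(b / (2 * π)) = -(b * (k.natAbs : ℝ)) / (2 * π) := by
      ring
    rw [hre, div_le_div_iff_of_pos_right (by positivity)]
    nlinarith
end
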